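/- Let W ∈ ℤ^n satisfy the stated conditions, with R = {i : W_i < 0} and m = n − |R|. Then the number of sequences A = (A_1, …, A_n) of positive integers with no stale duplicates such that B̄_{A,i} = W_i for all i equals M(G(W)) · ∏_{i ∈ R} |W_i|, where M(G(W)) denotes the number of perfect matchings of the bipartite graph G(W). In particular, such a sequence A exists if and only if G(W) has a perfect matching. -/

import Mathlib

/-- `ACK A i` is the acknowledgement after the first `i` packets of the 1-indexed
sequence `A`: the least positive integer not among `A 1, …, A i`.
In particular `ACK A 0 = 1`. -/
noncomputable def ACK (A : ℕ → ℕ) (i : ℕ) : ℕ :=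
  sInf {k : ℕ | 0 < k ∧ ∀ j, 1 ≤ j → j ≤ i → A j ≠ k}

/-- `bufSize A i` is the buffer size after the first `i` packets of the 1-indexed
sequence `A`: the number of distinct values among `A 1, …, A i` that are
`≥ ACK A i`. In particular `bufSize A 0 = 0`. -/
noncomputable def bufSize (A : ℕ → ℕ) (i : ℕ) : ℕ :=
  (((Finset.Icc 1 i).image A).filter (fun v => ACK A i ≤ v)).card

/-- `A` (1-indexed) is a permutation of `{1, …, n}`: every integer in `{1, …, n}`
occurs exactly once among `A 1, …, A n`. -/
def IsPermSeq (n : ℕ) (A : ℕ → ℕ) : Prop :=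
  Set.BijOn A (Set.Icc 1 n) (Set.Icc 1 n)

/-- Position `i` of `A` is a repeat: `A_i ∈ {A_1, …, A_{i-1}}`. -/
def IsRepeat (A : ℕ → ℕ) (i : ℕ) : Prop :=
  ∃ j, 1 ≤ j ∧ j < i ∧ A j = A i

open Classical in
/-- The modified buffer sequence `B̄(A)`: `B̄_{A,i} = -B_{A,i}` if `i` is a
repeat position, and `B̄_{A,i} = B_{A,i}` otherwise. -/
noncomputable def mbuf (A : ℕ → ℕ) (i : ℕ) : ℤ :=
  if IsRepeat A i then -(bufSize A i : ℤ) else (bufSize A i : ℤ)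

/-- `A` has no stale duplicates: every repeated packet is a repeat of a
still-buffered packet, i.e. `A_i ≥ ACK_{A,i-1}` at every repeat position
`1 ≤ i ≤ n` (duplicates of already uploaded packets are discarded). -/
def NoStaleDup (n : ℕ) (A : ℕ → ℕ) : Prop :=
  ∀ i, 1 ≤ i → i ≤ n → IsRepeat A i → ACK A (i - 1) ≤ A i

/-- `seqOf n A` is the 1-indexed sequence (of length `n`) of packet IDs
associated with the tuple `A : Fin n → ℕ` (value `0` outside `{1, …, n}`). -/
def seqOf (n : ℕ) (A : Fin n → ℕ) : ℕ → ℕ :=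
  fun i => if h : 1 ≤ i ∧ i ≤ n then A ⟨i - 1, by omega⟩ else 0

/-- `R = {i ∈ {1, …, n} : W_i < 0}`, the set of stages of a candidate modified
buffer sequence at which a repeat packet arrives. -/
def RSet (n : ℕ) (W : ℕ → ℤ) : Finset ℕ :=
  (Finset.Icc 1 n).filter (fun i => W i < 0)

/-- The acknowledgement sequence reconstructed from a candidate modified buffer
sequence `W : ℕ → ℤ` (with the convention `W 0 = 0`): `ACK_0 = 1` and, for
`i ≥ 1`, `ACK_i = ACK_{i-1}` if `W_i < 0` (a repeat); otherwise
`ACK_i = ACK_{i-1}` if `|W_i| = |W_{i-1}| + 1`,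
`ACK_i = ACK_{i-1} + |W_{i-1}| - |W_i| + 1` if `|W_i| < |W_{i-1}|`, and
`ACK_i = ACK_{i-1} + 1` if `|W_i| = |W_{i-1}|`. -/
def ackOfMW (W : ℕ → ℤ) : ℕ → ℕ
  | 0 => 1
  | i + 1 =>
      if W (i + 1) < 0 then ackOfMW W i
      else if (W (i + 1)).natAbs = (W i).natAbs + 1 then ackOfMW W i
      else if (W (i + 1)).natAbs < (W i).natAbs then
        ackOfMW W i + ((W i).natAbs - (W (i + 1)).natAbs) + 1
      else ackOfMW W i + 1

/-- `S_1 = {i ∈ {1, …, n} : i ∉ R and |W_i| = |W_{i-1}| + 1}`, the set of stages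
at which a new out-of-order packet is received. -/
def S1M (n : ℕ) (W : ℕ → ℤ) : Finset ℕ :=
  (Finset.Icc 1 n).filter
    (fun i => ¬ W i < 0 ∧ (W i).natAbs = (W (i - 1)).natAbs + 1)

/-- `V_2 = {1, …, m} \ {ACK_{i-1} : i ∉ S_1 and i ∉ R}`, where `m = n - |R|`:
the right vertex set of the bipartite graph `G(W)` (the left vertex set is
`V_1 = S_1`). -/
def V2M (n : ℕ) (W : ℕ → ℤ) : Finset ℕ :=
  Finset.Icc 1 (n - (RSet n W).card) \
    (((Finset.Icc 1 n).filter
        (fun i => ¬ (¬ W i < 0 ∧ (W i).natAbs = (W (i - 1)).natAbs + 1) ∧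
          ¬ W i < 0)).image
      (fun i => ackOfMW W (i - 1)))

/-- `M` is a perfect matching of the bipartite graph `G(W)` on `(V_1, V_2)`,
where `i ∈ V_1 = S_1` is adjacent to `j ∈ V_2` iff `j > ACK_i`: `M` is a set of
pairwise disjoint edges covering all of `V_1` and `V_2`. -/
def IsPerfectMatchingM (n : ℕ) (W : ℕ → ℤ) (M : Finset (ℕ × ℕ)) : Prop :=
  (∀ p ∈ M, p.1 ∈ S1M n W ∧ p.2 ∈ V2M n W ∧ ackOfMW W p.1 < p.2) ∧
  (∀ i ∈ S1M n W, ∃! j : ℕ, (i, j) ∈ M) ∧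
  (∀ j ∈ V2M n W, ∃! i : ℕ, (i, j) ∈ M)

/-- The preimage `B̄⁻¹(W)`: the set of sequences `A = (A_1, …, A_n)` of positive
integers, with no stale duplicates, whose modified buffer sequence is `W`. -/
def mbufPreimage (n : ℕ) (W : ℕ → ℤ) : Set (Fin n → ℕ) :=
  {A | (∀ k, 0 < A k) ∧ NoStaleDup n (seqOf n A) ∧
       ∀ i, 1 ≤ i → i ≤ n → mbuf (seqOf n A) i = W i}

namespace MbufAux

def recv (A : ℕ → ℕ) (i : ℕ) : Finset ℕ := (Finset.Icc 1 i).image A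

lemma mem_recv {A : ℕ → ℕ} {i v : ℕ} :
    v ∈ recv A i ↔ ∃ j, 1 ≤ j ∧ j ≤ i ∧ A j = v := by
  simp [recv, Finset.mem_image, Finset.mem_Icc, and_assoc]

lemma recv_zero (A : ℕ → ℕ) : recv A 0 = ∅ := by simp [recv]

lemma recv_succ (A : ℕ → ℕ) (i : ℕ) :
    recv A (i+1) = insert (A (i+1)) (recv A i) := by
  unfold recv
  rw [show Finset.Icc 1 (i+1) = insert (i+1) (Finset.Icc 1 i) by
    ext j; simp [Finset.mem_Icc, Finset.mem_insert]; omega]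
  simp [Finset.image_insert]

lemma recv_mono (A : ℕ → ℕ) {i j : ℕ} (h : i ≤ j) : recv A i ⊆ recv A j :=
  Finset.image_subset_image (Finset.Icc_subset_Icc_right h)

lemma ACK_eq_sInf (A : ℕ → ℕ) (i : ℕ) :
    ACK A i = sInf {k : ℕ | 0 < k ∧ k ∉ recv A i} := by
  unfold ACK; congr 1; ext k
  simp only [Set.mem_setOf_eq, mem_recv, not_exists]
  constructor
  · rintro ⟨hk, h⟩; exact ⟨hk, fun j hj => h j hj.1 hj.2.1 hj.2.2⟩
  · rintro ⟨hk, h⟩; exact ⟨hk, fun j h1 h2 h3 => h j ⟨h1, h2, h3⟩⟩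

lemma ack_set_nonempty (A : ℕ → ℕ) (i : ℕ) :
    {k : ℕ | 0 < k ∧ k ∉ recv A i}.Nonempty := by
  refine ⟨(recv A i).sup id + 1, Nat.succ_pos _, fun h => ?_⟩
  have := Finset.le_sup (f := id) h
  simp only [id] at this; omega

lemma ACK_pos (A : ℕ → ℕ) (i : ℕ) : 0 < ACK A i := by
  rw [ACK_eq_sInf]
  exact (Nat.sInf_mem (ack_set_nonempty A i)).1

lemma ACK_not_mem_recv (A : ℕ → ℕ) (i : ℕ) : ACK A i ∉ recv A i := by
  rw [ACK_eq_sInf]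
  exact (Nat.sInf_mem (ack_set_nonempty A i)).2

lemma mem_recv_of_lt_ACK {A : ℕ → ℕ} {i k : ℕ} (hk : 0 < k) (h : k < ACK A i) :
    k ∈ recv A i := by
  rw [ACK_eq_sInf] at h
  have := Nat.notMem_of_lt_sInf h
  simp only [Set.mem_setOf_eq, not_and, not_not] at this
  exact this hk

lemma ACK_eq_iff {A : ℕ → ℕ} {i a : ℕ} :
    ACK A i = a ↔ 0 < a ∧ a ∉ recv A i ∧ ∀ k, 0 < k → k < a → k ∈ recv A i := by
  constructor
  · rintro rfl
    exact ⟨ACK_pos A i, ACK_not_mem_recv A i, fun k hk h => mem_recv_of_lt_ACK hk h⟩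
  · rintro ⟨ha, hnm, hall⟩
    rw [ACK_eq_sInf]
    refine le_antisymm (Nat.sInf_le ⟨ha, hnm⟩) ?_
    by_contra h
    push_neg at h
    have hmem := Nat.sInf_mem (ack_set_nonempty A i)
    exact hmem.2 (hall _ hmem.1 h)

lemma ACK_congr {A A' : ℕ → ℕ} {i i' : ℕ} (h : recv A i = recv A' i') :
    ACK A i = ACK A' i' := by
  rw [ACK_eq_sInf, ACK_eq_sInf, h]

lemma ACK_mono (A : ℕ → ℕ) {i j : ℕ} (h : i ≤ j) : ACK A i ≤ ACK A j := by
  by_contra hlt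
  push_neg at hlt
  exact ACK_not_mem_recv A j
    (recv_mono A h (mem_recv_of_lt_ACK (ACK_pos A j) hlt))

lemma bufSize_eq (A : ℕ → ℕ) (i : ℕ) :
    bufSize A i = ((recv A i).filter (fun v => ACK A i ≤ v)).card := rfl

lemma recv_card {A : ℕ → ℕ} {i : ℕ} (hpos : ∀ v ∈ recv A i, 0 < v) :
    (recv A i).card = (ACK A i - 1) + bufSize A i := by
  have hsplit := Finset.card_filter_add_card_filter_not
    (s := recv A i) (p := fun v => ACK A i ≤ v)
  simp only [not_le] at hsplit
  have hlt : (recv A i).filter (fun a => a < ACK A i) = Finset.Icc 1 (ACK A i - 1) := by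
    ext v
    simp only [Finset.mem_filter, Finset.mem_Icc]
    constructor
    · rintro ⟨hv, hlt⟩
      have := hpos v hv; omega
    · rintro ⟨h1, h2⟩
      have hv : v < ACK A i := by have := ACK_pos A i; omega
      exact ⟨mem_recv_of_lt_ACK h1 hv, hv⟩
  have h2 := congrArg Finset.card hlt
  rw [Nat.card_Icc] at h2
  have hp := ACK_pos A i
  rw [bufSize_eq]
  omega

lemma IsRepeat_iff {A : ℕ → ℕ} {i : ℕ} (hi : 1 ≤ i) :
    IsRepeat A i ↔ A i ∈ recv A (i-1) := by
  rw [mem_recv]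
  constructor
  · rintro ⟨j, h1, h2, h3⟩; exact ⟨j, h1, by omega, h3⟩
  · rintro ⟨j, h1, h2, h3⟩; exact ⟨j, h1, by omega, h3⟩

end MbufAux

namespace MbufAux

def IOrd (n : ℕ) (W : ℕ → ℤ) : Finset ℕ :=
  (Finset.Icc 1 n).filter
    (fun i => ¬ W i < 0 ∧ (W i).natAbs ≠ (W (i - 1)).natAbs + 1)

lemma V2M_eq (n : ℕ) (W : ℕ → ℤ) :
    V2M n W = Finset.Icc 1 (n - (RSet n W).card) \
      ((IOrd n W).image (fun i => ackOfMW W (i - 1))) := by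
  have him : ((Finset.Icc 1 n).filter
      (fun i => ¬ (¬ W i < 0 ∧ (W i).natAbs = (W (i - 1)).natAbs + 1) ∧
        ¬ W i < 0)) = IOrd n W := by
    ext i
    simp only [IOrd, Finset.mem_filter]
    tauto
  unfold V2M
  rw [him]

lemma mem_RSet {n : ℕ} {W : ℕ → ℤ} {i : ℕ} :
    i ∈ RSet n W ↔ 1 ≤ i ∧ i ≤ n ∧ W i < 0 := by
  simp [RSet, Finset.mem_filter, Finset.mem_Icc, and_assoc]

lemma mem_S1M {n : ℕ} {W : ℕ → ℤ} {i : ℕ} :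
    i ∈ S1M n W ↔ 1 ≤ i ∧ i ≤ n ∧ ¬ W i < 0 ∧
      (W i).natAbs = (W (i - 1)).natAbs + 1 := by
  simp [S1M, Finset.mem_filter, Finset.mem_Icc, and_assoc]

lemma mem_IOrd {n : ℕ} {W : ℕ → ℤ} {i : ℕ} :
    i ∈ IOrd n W ↔ 1 ≤ i ∧ i ≤ n ∧ ¬ W i < 0 ∧
      (W i).natAbs ≠ (W (i - 1)).natAbs + 1 := by
  simp [IOrd, Finset.mem_filter, Finset.mem_Icc, and_assoc]

lemma ackOfMW_zero (W : ℕ → ℤ) : ackOfMW W 0 = 1 := rfl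

lemma ackOfMW_succ (W : ℕ → ℤ) (i : ℕ) :
    ackOfMW W (i+1) =
      if W (i + 1) < 0 then ackOfMW W i
      else if (W (i + 1)).natAbs = (W i).natAbs + 1 then ackOfMW W i
      else if (W (i + 1)).natAbs < (W i).natAbs then
        ackOfMW W i + ((W i).natAbs - (W (i + 1)).natAbs) + 1
      else ackOfMW W i + 1 := rfl

lemma ackOfMW_succ_neg {W : ℕ → ℤ} {i : ℕ} (h : W (i+1) < 0) :
    ackOfMW W (i+1) = ackOfMW W i := by
  rw [ackOfMW_succ]; simp [h]

lemma ackOfMW_succ_S1 {W : ℕ → ℤ} {i : ℕ} (h : ¬ W (i+1) < 0)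
    (h2 : (W (i+1)).natAbs = (W i).natAbs + 1) :
    ackOfMW W (i+1) = ackOfMW W i := by
  rw [ackOfMW_succ]; simp [h, h2]

lemma ackOfMW_succ_io {W : ℕ → ℤ} {i : ℕ} (h : ¬ W (i+1) < 0)
    (h2 : (W (i+1)).natAbs ≠ (W i).natAbs + 1)
    (h3 : (W (i+1)).natAbs ≤ (W i).natAbs) :
    ackOfMW W (i+1) = ackOfMW W i + ((W i).natAbs - (W (i+1)).natAbs) + 1 := by
  rw [ackOfMW_succ]
  rcases lt_or_eq_of_le h3 with h4 | h4
  · simp [h, h2, h4]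
  · simp [h, h2, h4, Nat.sub_self, not_lt_of_ge (le_of_eq h4)]

lemma ackOfMW_le_succ (W : ℕ → ℤ) (i : ℕ) : ackOfMW W i ≤ ackOfMW W (i+1) := by
  rw [ackOfMW_succ]
  split
  · omega
  split
  · omega
  split <;> omega

lemma ackOfMW_mono (W : ℕ → ℤ) {i j : ℕ} (h : i ≤ j) :
    ackOfMW W i ≤ ackOfMW W j := by
  induction j with
  | zero => simp_all
  | succ k ih =>
      rcases Nat.lt_or_ge i (k+1) with h2 | h2
      · exact le_trans (ih (by omega)) (ackOfMW_le_succ W k)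
      · have : i = k + 1 := by omega
        subst this; rfl

lemma ackOfMW_pos (W : ℕ → ℤ) (i : ℕ) : 1 ≤ ackOfMW W i :=
  ackOfMW_mono W (Nat.zero_le i)

lemma ackOfMW_lt_of_io {W : ℕ → ℤ} {i : ℕ} (h : ¬ W (i+1) < 0)
    (h2 : (W (i+1)).natAbs ≠ (W i).natAbs + 1) :
    ackOfMW W i < ackOfMW W (i+1) := by
  rw [ackOfMW_succ]
  simp only [if_neg h, if_neg h2]
  split <;> omega

def nrW (W : ℕ → ℤ) (i : ℕ) : ℕ :=
  ((Finset.Icc 1 i).filter (fun t => ¬ W t < 0)).card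

lemma nrW_succ (W : ℕ → ℤ) (i : ℕ) :
    nrW W (i+1) = nrW W i + (if ¬ W (i+1) < 0 then 1 else 0) := by
  unfold nrW
  rw [show Finset.Icc 1 (i+1) = insert (i+1) (Finset.Icc 1 i) by
    ext j; simp [Finset.mem_Icc, Finset.mem_insert]; omega]
  by_cases h : W (i+1) < 0
  · rw [Finset.filter_insert, if_neg (by simpa using h)]
    simp [h]
  · rw [Finset.filter_insert, if_pos (by simpa using h),
      Finset.card_insert_of_notMem
        (fun hmem => absurd (Finset.mem_of_mem_filter _ hmem)
          (by simp [Finset.mem_Icc]))]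
    simp [h]

section Hyp

variable {n : ℕ} {W : ℕ → ℤ}
variable (hW0 : W 0 = 0) (hWn : W n = 0)
variable (hrep : ∀ i ∈ RSet n W, (W i).natAbs = (W (i - 1)).natAbs)
variable (hstep : ∀ i, 1 ≤ i → i ≤ n → i ∉ RSet n W →
      (W i).natAbs ≤ (W (i - 1)).natAbs + 1)

include hW0 hrep hstep in
lemma ack_add_b {i : ℕ} (hi : i ≤ n) :
    ackOfMW W i + (W i).natAbs = 1 + nrW W i := by
  induction i with
  | zero => simp [ackOfMW_zero, nrW, hW0]
  | succ k ih =>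
      have hk := ih (by omega)
      rw [nrW_succ]
      by_cases hneg : W (k+1) < 0
      · have hb : (W (k+1)).natAbs = (W k).natAbs := by
          have := hrep (k+1) (mem_RSet.2 ⟨by omega, by omega, hneg⟩)
          simpa using this
        rw [ackOfMW_succ_neg hneg, hb]
        simp [hneg]; omega
      · have hle : (W (k+1)).natAbs ≤ (W k).natAbs + 1 := by
          have := hstep (k+1) (by omega) (by omega)
            (fun hmem => hneg (mem_RSet.1 hmem).2.2)
          simpa using this
        by_cases hS1 : (W (k+1)).natAbs = (W k).natAbs + 1
        · rw [ackOfMW_succ_S1 hneg hS1, hS1]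
          simp [hneg]; omega
        · have hle2 : (W (k+1)).natAbs ≤ (W k).natAbs := by omega
          rw [ackOfMW_succ_io hneg hS1 hle2]
          simp [hneg]; omega

end Hyp

end MbufAux

namespace MbufAux

lemma card_RSet_add_nr (n : ℕ) (W : ℕ → ℤ) : (RSet n W).card + nrW W n = n := by
  have h := Finset.card_filter_add_card_filter_not
    (s := Finset.Icc 1 n) (p := fun i => W i < 0)
  rw [Nat.card_Icc] at h
  unfold RSet nrW
  simp only [not_lt] at h ⊢
  omega

lemma ackOfMW_n {n : ℕ} {W : ℕ → ℤ} (hW0 : W 0 = 0) (hWn : W n = 0)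
    (hrep : ∀ i ∈ RSet n W, (W i).natAbs = (W (i - 1)).natAbs)
    (hstep : ∀ i, 1 ≤ i → i ≤ n → i ∉ RSet n W →
      (W i).natAbs ≤ (W (i - 1)).natAbs + 1) :
    ackOfMW W n = 1 + (n - (RSet n W).card) := by
  have h1 := ack_add_b hW0 hrep hstep (le_refl n)
  have h2 := card_RSet_add_nr n W
  rw [hWn] at h1
  simp only [Int.natAbs_zero] at h1
  omega

lemma exists_io_of_le {n : ℕ} {W : ℕ → ℤ} (hW0 : W 0 = 0) (hWn : W n = 0)
    (hrep : ∀ i ∈ RSet n W, (W i).natAbs = (W (i - 1)).natAbs)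
    (hstep : ∀ i, 1 ≤ i → i ≤ n → i ∉ RSet n W →
      (W i).natAbs ≤ (W (i - 1)).natAbs + 1)
    {i : ℕ} (hi : i ≤ n) (h : ackOfMW W i ≤ n - (RSet n W).card) :
    ∃ s ∈ IOrd n W, ackOfMW W (s - 1) = ackOfMW W i := by
  set a := ackOfMW W i with ha
  have hn : a < ackOfMW W n := by
    rw [ackOfMW_n hW0 hWn hrep hstep]; omega
  have hne : {s : ℕ | a < ackOfMW W s}.Nonempty := ⟨n, hn⟩
  have hfind : a < ackOfMW W (sInf {s : ℕ | a < ackOfMW W s}) :=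
    Nat.sInf_mem hne
  have hle : sInf {s : ℕ | a < ackOfMW W s} ≤ n := Nat.sInf_le hn
  have hpos : sInf {s : ℕ | a < ackOfMW W s} ≠ 0 := by
    intro h0
    rw [h0, ackOfMW_zero] at hfind
    have := ackOfMW_pos W i
    omega
  obtain ⟨t, ht⟩ : ∃ t, sInf {s : ℕ | a < ackOfMW W s} = t + 1 :=
    ⟨sInf {s : ℕ | a < ackOfMW W s} - 1, by omega⟩
  rw [ht] at hfind hle
  have hmem : a < ackOfMW W (t + 1) := hfind
  have hnotmem' : t ∉ {s : ℕ | a < ackOfMW W s} :=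
    Nat.notMem_of_lt_sInf (by rw [ht]; omega)
  have hnotmem : ¬ a < ackOfMW W t := by
    simpa using hnotmem'
  have hit : i ≤ t := by
    by_contra hc
    push_neg at hc
    have := ackOfMW_mono W (show t + 1 ≤ i by omega)
    omega
  have heq : ackOfMW W t = a := le_antisymm (by omega) (ha ▸ ackOfMW_mono W hit)
  by_cases hneg : W (t+1) < 0
  · rw [ackOfMW_succ_neg hneg] at hmem; omega
  by_cases hS1 : (W (t+1)).natAbs = (W t).natAbs + 1
  · rw [ackOfMW_succ_S1 hneg hS1] at hmem; omega
  exact ⟨t+1, mem_IOrd.2 ⟨by omega, by omega, hneg, by simpa using hS1⟩,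
    by simpa using heq⟩

lemma ackOfMW_not_mem_V2M {n : ℕ} {W : ℕ → ℤ} (hW0 : W 0 = 0) (hWn : W n = 0)
    (hrep : ∀ i ∈ RSet n W, (W i).natAbs = (W (i - 1)).natAbs)
    (hstep : ∀ i, 1 ≤ i → i ≤ n → i ∉ RSet n W →
      (W i).natAbs ≤ (W (i - 1)).natAbs + 1)
    {i : ℕ} (hi : i ≤ n) : ackOfMW W i ∉ V2M n W := by
  intro hmem
  rw [V2M_eq, Finset.mem_sdiff] at hmem
  obtain ⟨hIcc, hnot⟩ := hmem
  obtain ⟨s, hs, he⟩ := exists_io_of_le hW0 hWn hrep hstep hi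
    (Finset.mem_Icc.1 hIcc).2
  exact hnot (Finset.mem_image.2 ⟨s, hs, he⟩)

lemma mem_V2M {n : ℕ} {W : ℕ → ℤ} {j : ℕ} :
    j ∈ V2M n W ↔ (1 ≤ j ∧ j ≤ n - (RSet n W).card) ∧
      ∀ s ∈ IOrd n W, ackOfMW W (s - 1) ≠ j := by
  rw [V2M_eq, Finset.mem_sdiff, Finset.mem_Icc]
  simp only [Finset.mem_image, not_exists, not_and]

end MbufAux

namespace MbufAux

lemma step_rep {A : ℕ → ℕ} {i : ℕ} (h : A (i+1) ∈ recv A i) :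
    recv A (i+1) = recv A i ∧ ACK A (i+1) = ACK A i ∧
      bufSize A (i+1) = bufSize A i := by
  have hr : recv A (i+1) = recv A i := by
    rw [recv_succ, Finset.insert_eq_self.2 h]
  have hack : ACK A (i+1) = ACK A i := ACK_congr hr
  refine ⟨hr, hack, ?_⟩
  rw [bufSize_eq, bufSize_eq, hr, hack]

lemma step_high {A : ℕ → ℕ} {i : ℕ} (hpos : ∀ v ∈ recv A i, 0 < v)
    (hnm : A (i+1) ∉ recv A i) (hgt : ACK A i < A (i+1)) :
    ACK A (i+1) = ACK A i ∧ bufSize A (i+1) = bufSize A i + 1 := by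
  have hpos' : ∀ v ∈ recv A (i+1), 0 < v := by
    intro v hv
    rw [recv_succ, Finset.mem_insert] at hv
    rcases hv with rfl | hv
    · exact lt_of_le_of_lt (Nat.zero_le _) hgt
    · exact hpos v hv
  have hack : ACK A (i+1) = ACK A i := by
    rw [ACK_eq_iff]
    refine ⟨ACK_pos A i, ?_, fun k hk hlt => ?_⟩
    · rw [recv_succ, Finset.mem_insert]
      push_neg
      exact ⟨by omega, ACK_not_mem_recv A i⟩
    · exact recv_mono A (by omega) (mem_recv_of_lt_ACK hk hlt)
  have hcard : (recv A (i+1)).card = (recv A i).card + 1 := by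
    rw [recv_succ, Finset.card_insert_of_notMem hnm]
  have h1 := recv_card hpos
  have h2 := recv_card hpos'
  have := ACK_pos A i
  rw [hack] at h2
  exact ⟨hack, by omega⟩

lemma step_eq {A : ℕ → ℕ} {i : ℕ} (hpos : ∀ v ∈ recv A i, 0 < v)
    (heq : A (i+1) = ACK A i) :
    ACK A i < ACK A (i+1) ∧
    bufSize A (i+1) + (ACK A (i+1) - ACK A i) = bufSize A i + 1 ∧
    (∀ k, ACK A i < k → k < ACK A (i+1) → k ∈ recv A i) := by
  have hnm : A (i+1) ∉ recv A i := heq ▸ ACK_not_mem_recv A i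
  have hpos' : ∀ v ∈ recv A (i+1), 0 < v := by
    intro v hv
    rw [recv_succ, Finset.mem_insert] at hv
    rcases hv with rfl | hv
    · rw [heq]; exact ACK_pos A i
    · exact hpos v hv
  have hlt : ACK A i < ACK A (i+1) := by
    rcases Nat.lt_or_ge (ACK A i) (ACK A (i+1)) with h | h
    · exact h
    · exfalso
      have hle := ACK_mono A (show i ≤ i + 1 by omega)
      have hae : ACK A (i+1) = ACK A i := by omega
      have : ACK A (i+1) ∈ recv A (i+1) := by
        rw [recv_succ, hae, ← heq]
        exact Finset.mem_insert_self _ _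
      exact ACK_not_mem_recv A (i+1) this
  have hcard : (recv A (i+1)).card = (recv A i).card + 1 := by
    rw [recv_succ, Finset.card_insert_of_notMem hnm]
  have h1 := recv_card hpos
  have h2 := recv_card hpos'
  have := ACK_pos A i
  refine ⟨hlt, by omega, fun k hk1 hk2 => ?_⟩
  have : k ∈ recv A (i+1) := mem_recv_of_lt_ACK (by omega) hk2
  rw [recv_succ, Finset.mem_insert] at this
  rcases this with rfl | h
  · omega
  · exact h

lemma ACK_le_of_not_mem {A : ℕ → ℕ} {i : ℕ} (hnm : A (i+1) ∉ recv A i)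
    (hv : 0 < A (i+1)) : ACK A i ≤ A (i+1) := by
  by_contra h
  push_neg at h
  exact hnm (mem_recv_of_lt_ACK hv h)

end MbufAux

namespace MbufAux

section Fwd

variable {n : ℕ} {W : ℕ → ℤ} {A : Fin n → ℕ}

lemma seqOf_pos (hA : A ∈ mbufPreimage n W) {j : ℕ} (h1 : 1 ≤ j) (h2 : j ≤ n) :
    0 < seqOf n A j := by
  unfold seqOf
  rw [dif_pos ⟨h1, h2⟩]
  exact hA.1 _

lemma recv_pos (hA : A ∈ mbufPreimage n W) {i : ℕ} (hi : i ≤ n) :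
    ∀ v ∈ recv (seqOf n A) i, 0 < v := by
  intro v hv
  obtain ⟨j, h1, h2, rfl⟩ := mem_recv.1 hv
  exact seqOf_pos hA h1 (le_trans h2 hi)

lemma fwd_bsize (hW0 : W 0 = 0) (hA : A ∈ mbufPreimage n W) {i : ℕ} (hi : i ≤ n) :
    bufSize (seqOf n A) i = (W i).natAbs := by
  rcases Nat.eq_zero_or_pos i with rfl | hp
  · rw [hW0]
    simp [bufSize]
  · have hm := hA.2.2 i hp hi
    unfold mbuf at hm
    split at hm
    · rw [← hm]; simp
    · rw [← hm]; simp

lemma fwd_repeat_iff (hW0 : W 0 = 0) (hWn : W n = 0)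
    (hne : ∀ i, 1 ≤ i → i < n → W i ≠ 0)
    (hA : A ∈ mbufPreimage n W) {i : ℕ} (h1 : 1 ≤ i) (h2 : i ≤ n) :
    IsRepeat (seqOf n A) i ↔ W i < 0 := by
  by_cases hin : i < n
  · have hm := hA.2.2 i h1 h2
    have hb := fwd_bsize hW0 hA h2
    have hne' := hne i h1 hin
    unfold mbuf at hm
    constructor
    · intro hrep
      rw [if_pos hrep] at hm
      omega
    · intro hneg
      by_contra hrep
      rw [if_neg hrep] at hm
      omega
  · have hni : i = n := by omega
    rw [← hni] at hWn
    constructor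
    · intro hrep
      exfalso
      obtain ⟨t, rfl⟩ : ∃ t, i = t + 1 := ⟨i - 1, by omega⟩
      have hmem : seqOf n A (t+1) ∈ recv (seqOf n A) t := by
        have := (IsRepeat_iff h1).1 hrep
        simpa using this
      have hstepr := (step_rep hmem).2.2
      have hb1 := fwd_bsize hW0 hA h2
      have hb0 := fwd_bsize hW0 hA (show t ≤ n by omega)
      rw [hWn] at hb1
      rcases Nat.eq_zero_or_pos t with rfl | ht
      · rw [recv_zero] at hmem
        exact absurd hmem (Finset.notMem_empty _)
      · have := hne t ht (by omega)
        omega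
    · intro hneg
      rw [hWn] at hneg
      exact absurd hneg (by omega)

lemma fwd_not_mem (hW0 : W 0 = 0) (hWn : W n = 0)
    (hne : ∀ i, 1 ≤ i → i < n → W i ≠ 0)
    (hA : A ∈ mbufPreimage n W) {i : ℕ} (h1 : 1 ≤ i) (h2 : i ≤ n)
    (hneg : ¬ W i < 0) : seqOf n A i ∉ recv (seqOf n A) (i - 1) := by
  intro hmem
  exact hneg ((fwd_repeat_iff hW0 hWn hne hA h1 h2).1 ((IsRepeat_iff h1).2 hmem))

lemma fwd_ACK (hW0 : W 0 = 0) (hWn : W n = 0)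
    (hne : ∀ i, 1 ≤ i → i < n → W i ≠ 0)
    (hA : A ∈ mbufPreimage n W) :
    ∀ i, i ≤ n → ACK (seqOf n A) i = ackOfMW W i := by
  intro i
  induction i with
  | zero =>
      intro _
      rw [ackOfMW_zero, ACK_eq_iff]
      exact ⟨Nat.one_pos, by rw [recv_zero]; exact Finset.notMem_empty _,
        fun k hk hlt => by omega⟩
  | succ t ih =>
      intro hle
      have iht := ih (by omega)
      have hposr := recv_pos hA (show t ≤ n by omega)
      by_cases hneg : W (t+1) < 0
      · have hrep := (fwd_repeat_iff hW0 hWn hne hA (by omega) hle).2 hneg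
        have hmem : seqOf n A (t+1) ∈ recv (seqOf n A) t := by
          have := (IsRepeat_iff (by omega)).1 hrep
          simpa using this
        rw [(step_rep hmem).2.1, iht, ackOfMW_succ_neg hneg]
      · have hnm : seqOf n A (t+1) ∉ recv (seqOf n A) t := by
          have := fwd_not_mem hW0 hWn hne hA (by omega) hle hneg
          simpa using this
        have hvpos : 0 < seqOf n A (t+1) := seqOf_pos hA (by omega) hle
        have hle2 := ACK_le_of_not_mem hnm hvpos
        have hBt := fwd_bsize hW0 hA (show t ≤ n by omega)
        have hBt1 := fwd_bsize hW0 hA hle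
        rcases Nat.lt_or_ge (ACK (seqOf n A) t) (seqOf n A (t+1)) with hgt | hge
        · obtain ⟨hack, hBsucc⟩ := step_high hposr hnm hgt
          have hS1 : (W (t+1)).natAbs = (W t).natAbs + 1 := by omega
          rw [hack, iht, ackOfMW_succ_S1 hneg hS1]
        · have heq : seqOf n A (t+1) = ACK (seqOf n A) t := by omega
          obtain ⟨hlt, hbal, _⟩ := step_eq hposr heq
          have hne2 : (W (t+1)).natAbs ≠ (W t).natAbs + 1 := by omega
          rw [ackOfMW_succ_io hneg hne2 (by omega), ← iht]
          omega

lemma fwd_io_val (hW0 : W 0 = 0) (hWn : W n = 0)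
    (hne : ∀ i, 1 ≤ i → i < n → W i ≠ 0)
    (hA : A ∈ mbufPreimage n W) {i : ℕ} (hio : i ∈ IOrd n W) :
    seqOf n A i = ackOfMW W (i - 1) := by
  obtain ⟨h1, h2, hneg, hnS1⟩ := mem_IOrd.1 hio
  obtain ⟨t, rfl⟩ : ∃ t, i = t + 1 := ⟨i - 1, by omega⟩
  simp only [Nat.add_sub_cancel] at hnS1 ⊢
  have hnm : seqOf n A (t+1) ∉ recv (seqOf n A) t := by
    have := fwd_not_mem hW0 hWn hne hA h1 h2 hneg
    simpa using this
  have hvpos : 0 < seqOf n A (t+1) := seqOf_pos hA h1 h2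
  have hle2 := ACK_le_of_not_mem hnm hvpos
  have hposr := recv_pos hA (show t ≤ n by omega)
  have hBt := fwd_bsize hW0 hA (show t ≤ n by omega)
  have hBt1 := fwd_bsize hW0 hA h2
  have hackt := fwd_ACK hW0 hWn hne hA t (by omega)
  rcases Nat.lt_or_ge (ACK (seqOf n A) t) (seqOf n A (t+1)) with hgt | hge
  · obtain ⟨hack, hBsucc⟩ := step_high hposr hnm hgt
    exact absurd (by omega : (W (t+1)).natAbs = (W t).natAbs + 1) hnS1
  · rw [← hackt]
    omega

lemma fwd_s1_val (hW0 : W 0 = 0) (hWn : W n = 0)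
    (hne : ∀ i, 1 ≤ i → i < n → W i ≠ 0)
    (hA : A ∈ mbufPreimage n W) {i : ℕ} (hs1 : i ∈ S1M n W) :
    seqOf n A i ∉ recv (seqOf n A) (i-1) ∧ ackOfMW W (i-1) < seqOf n A i := by
  obtain ⟨h1, h2, hneg, hS1⟩ := mem_S1M.1 hs1
  obtain ⟨t, rfl⟩ : ∃ t, i = t + 1 := ⟨i - 1, by omega⟩
  simp only [Nat.add_sub_cancel] at hS1 ⊢
  have hnm : seqOf n A (t+1) ∉ recv (seqOf n A) t := by
    have := fwd_not_mem hW0 hWn hne hA h1 h2 hneg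
    simpa using this
  have hvpos : 0 < seqOf n A (t+1) := seqOf_pos hA h1 h2
  have hle2 := ACK_le_of_not_mem hnm hvpos
  have hposr := recv_pos hA (show t ≤ n by omega)
  have hBt := fwd_bsize hW0 hA (show t ≤ n by omega)
  have hBt1 := fwd_bsize hW0 hA h2
  have hackt := fwd_ACK hW0 hWn hne hA t (by omega)
  refine ⟨hnm, ?_⟩
  rcases Nat.lt_or_ge (ACK (seqOf n A) t) (seqOf n A (t+1)) with hgt | hge
  · omega
  · have heq : seqOf n A (t+1) = ACK (seqOf n A) t := by omega
    obtain ⟨hlt, hbal, _⟩ := step_eq hposr heq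
    omega

lemma fwd_le_m (hW0 : W 0 = 0) (hWn : W n = 0)
    (hne : ∀ i, 1 ≤ i → i < n → W i ≠ 0)
    (hrep : ∀ i ∈ RSet n W, (W i).natAbs = (W (i - 1)).natAbs)
    (hstep : ∀ i, 1 ≤ i → i ≤ n → i ∉ RSet n W →
      (W i).natAbs ≤ (W (i - 1)).natAbs + 1)
    (hA : A ∈ mbufPreimage n W) {v : ℕ} (hv : v ∈ recv (seqOf n A) n) :
    v ≤ n - (RSet n W).card := by
  have hB : bufSize (seqOf n A) n = 0 := by
    rw [fwd_bsize hW0 hA le_rfl, hWn]; rfl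
  rw [bufSize_eq, Finset.card_eq_zero] at hB
  have hvlt : v < ACK (seqOf n A) n := by
    by_contra hc
    push_neg at hc
    have : v ∈ (recv (seqOf n A) n).filter (fun v => ACK (seqOf n A) n ≤ v) :=
      Finset.mem_filter.2 ⟨hv, hc⟩
    rw [hB] at this
    exact Finset.notMem_empty _ this
  have hackn : ACK (seqOf n A) n = ackOfMW W n := fwd_ACK hW0 hWn hne hA n le_rfl
  have hmono := ack_add_b hW0 hrep hstep (le_refl n)
  have hcard := card_RSet_add_nr n W
  rw [hWn] at hmono
  simp only [Int.natAbs_zero] at hmono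
  omega

end Fwd

end MbufAux

namespace MbufAux

noncomputable def nthS (s : Finset ℕ) (k : ℕ) : ℕ :=
  if h : k - 1 < s.card then (s.orderIsoOfFin rfl ⟨k - 1, h⟩ : ℕ) else 0

def rankS (s : Finset ℕ) (v : ℕ) : ℕ := (s.filter (fun x => x < v)).card + 1

lemma nthS_mem {s : Finset ℕ} {k : ℕ} (h1 : 1 ≤ k) (h2 : k ≤ s.card) :
    nthS s k ∈ s := by
  unfold nthS
  rw [dif_pos (by omega)]
  exact (s.orderIsoOfFin rfl _).2

lemma rankS_pos (s : Finset ℕ) (v : ℕ) : 1 ≤ rankS s v := Nat.le_add_left 1 _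

lemma rankS_le {s : Finset ℕ} {v : ℕ} (hv : v ∈ s) : rankS s v ≤ s.card := by
  unfold rankS
  have : (s.filter (fun x => x < v)).card < s.card := by
    apply Finset.card_lt_card
    constructor
    · exact Finset.filter_subset _ _
    · intro hsub
      have := hsub hv
      simp at this
  omega

lemma filter_lt_ssubset {s : Finset ℕ} {v v' : ℕ} (hv : v ∈ s) (hlt : v < v') :
    s.filter (fun x => x < v) ⊂ s.filter (fun x => x < v') := by
  constructor
  · intro x hx
    rw [Finset.mem_filter] at hx ⊢
    exact ⟨hx.1, by omega⟩
  · intro hsub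
    have h2 := hsub (Finset.mem_filter.2 ⟨hv, hlt⟩)
    rw [Finset.mem_filter] at h2
    omega

lemma rankS_injOn {s : Finset ℕ} {v v' : ℕ} (hv : v ∈ s) (hv' : v' ∈ s)
    (h : rankS s v = rankS s v') : v = v' := by
  rcases Nat.lt_trichotomy v v' with hlt | he | hlt
  · have := Finset.card_lt_card (filter_lt_ssubset hv hlt)
    unfold rankS at h
    omega
  · exact he
  · have := Finset.card_lt_card (filter_lt_ssubset hv' hlt)
    unfold rankS at h
    omega

lemma rankS_nthS {s : Finset ℕ} {k : ℕ} (h1 : 1 ≤ k) (h2 : k ≤ s.card) :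
    rankS s (nthS s k) = k := by
  unfold rankS nthS
  rw [dif_pos (by omega : k - 1 < s.card)]
  set e := s.orderIsoOfFin rfl with he
  have hfil : s.filter (fun x => x < (e ⟨k - 1, by omega⟩ : ℕ)) =
      (Finset.univ.filter (fun j : Fin s.card => j < (⟨k - 1, by omega⟩ : Fin s.card))).image
        (fun j => (e j : ℕ)) := by
    ext x
    simp only [Finset.mem_filter, Finset.mem_image, Finset.mem_univ, true_and]
    constructor
    · rintro ⟨hx, hlt⟩
      refine ⟨e.symm ⟨x, hx⟩, ?_, by simp⟩
      rw [← e.lt_iff_lt]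
      simp only [OrderIso.apply_symm_apply]; exact hlt
    · rintro ⟨j, hj, rfl⟩
      refine ⟨(e j).2, ?_⟩
      have : e j < e ⟨k - 1, by omega⟩ := by
        rw [e.lt_iff_lt]; exact hj
      exact this
  rw [hfil]
  rw [Finset.card_image_of_injective _ (fun a b hab => by
    have : (e a : s) = e b := Subtype.ext hab
    exact e.injective this)]
  have hiio : Finset.univ.filter (fun j : Fin s.card => j < (⟨k - 1, by omega⟩ : Fin s.card))
      = Finset.Iio ⟨k - 1, by omega⟩ := by
    ext j; simp [Finset.mem_Iio]
  rw [hiio, Fin.card_Iio]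
  simp only [Fin.val_mk]
  omega

end MbufAux

namespace MbufAux

noncomputable def mvF (M : Finset (ℕ × ℕ)) (t : ℕ) : ℕ := sInf {j | (t, j) ∈ M}

noncomputable def SsetF (n : ℕ) (W : ℕ → ℤ) (M : Finset (ℕ × ℕ)) (i : ℕ) : Finset ℕ :=
  ((S1M n W).filter (fun s => s ≤ i)).image (mvF M)

noncomputable def bufDF (n : ℕ) (W : ℕ → ℤ) (M : Finset (ℕ × ℕ)) (i : ℕ) :
    Finset ℕ :=
  (SsetF n W M i).filter (fun v => ackOfMW W i ≤ v)

noncomputable def gF (n : ℕ) (W : ℕ → ℤ) (M : Finset (ℕ × ℕ)) (c : ℕ → ℕ) :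
    ℕ → ℕ := fun i =>
  if i ∈ RSet n W then nthS (bufDF n W M (i-1)) (c i)
  else if i ∈ S1M n W then mvF M i
  else ackOfMW W (i-1)

noncomputable def AFF (n : ℕ) (W : ℕ → ℤ) (M : Finset (ℕ × ℕ)) (c : ℕ → ℕ) :
    Fin n → ℕ := fun k => gF n W M c (k.1 + 1)

section Bwd

variable {n : ℕ} {W : ℕ → ℤ} {M : Finset (ℕ × ℕ)} {c : ℕ → ℕ}

lemma mv_mem (hM : IsPerfectMatchingM n W M) {t : ℕ} (ht : t ∈ S1M n W) :
    (t, mvF M t) ∈ M := by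
  obtain ⟨j, hj, huniq⟩ := hM.2.1 t ht
  have hset : {j' : ℕ | (t, j') ∈ M} = {j} := by
    ext x
    simp only [Set.mem_setOf_eq, Set.mem_singleton_iff]
    exact ⟨fun hx => huniq x hx, fun hx => hx ▸ hj⟩
  unfold mvF
  rw [hset, csInf_singleton]
  exact hj

lemma mv_eq (hM : IsPerfectMatchingM n W M) {t j : ℕ} (ht : t ∈ S1M n W)
    (hj : (t, j) ∈ M) : j = mvF M t := by
  obtain ⟨j', hj', huniq⟩ := hM.2.1 t ht
  rw [huniq j hj, huniq (mvF M t) (mv_mem hM ht)]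

lemma mv_mem_V2 (hM : IsPerfectMatchingM n W M) {t : ℕ} (ht : t ∈ S1M n W) :
    mvF M t ∈ V2M n W ∧ ackOfMW W t < mvF M t := by
  have := hM.1 (t, mvF M t) (mv_mem hM ht)
  exact ⟨this.2.1, this.2.2⟩

lemma mv_inj (hM : IsPerfectMatchingM n W M) {t t' : ℕ} (ht : t ∈ S1M n W)
    (ht' : t' ∈ S1M n W) (h : mvF M t = mvF M t') : t = t' := by
  obtain ⟨s, hs, huniq⟩ := hM.2.2 (mvF M t) (mv_mem_V2 hM ht).1
  rw [huniq t (mv_mem hM ht), huniq t' (h ▸ mv_mem hM ht')]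

lemma V2_pos {j : ℕ} (hj : j ∈ V2M n W) : 1 ≤ j := (mem_V2M.1 hj).1.1

lemma V2_le_m {j : ℕ} (hj : j ∈ V2M n W) : j ≤ n - (RSet n W).card :=
  (mem_V2M.1 hj).1.2

lemma mem_SsetF {i v : ℕ} :
    v ∈ SsetF n W M i ↔ ∃ s, s ∈ S1M n W ∧ s ≤ i ∧ mvF M s = v := by
  unfold SsetF
  simp only [Finset.mem_image, Finset.mem_filter]
  constructor
  · rintro ⟨s, ⟨h1, h2⟩, h3⟩; exact ⟨s, h1, h2, h3⟩
  · rintro ⟨s, h1, h2, h3⟩; exact ⟨s, ⟨h1, h2⟩, h3⟩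

lemma Sset_zero : SsetF n W M 0 = ∅ := by
  unfold SsetF
  rw [Finset.filter_false_of_mem, Finset.image_empty]
  intro s hs
  have := (mem_S1M.1 hs).1
  omega

lemma Sset_succ_not {t : ℕ} (h : t + 1 ∉ S1M n W) :
    SsetF n W M (t+1) = SsetF n W M t := by
  unfold SsetF
  congr 1
  ext s
  simp only [Finset.mem_filter]
  constructor
  · rintro ⟨h1, h2⟩
    refine ⟨h1, ?_⟩
    rcases Nat.lt_or_ge s (t+1) with h3 | h3
    · omega
    · exact absurd (show s = t + 1 by omega) (fun he => h (he ▸ h1))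
  · rintro ⟨h1, h2⟩; exact ⟨h1, by omega⟩

lemma Sset_succ_S1 {t : ℕ} (h : t + 1 ∈ S1M n W) :
    SsetF n W M (t+1) = insert (mvF M (t+1)) (SsetF n W M t) := by
  unfold SsetF
  rw [show (S1M n W).filter (fun s => s ≤ t + 1)
      = insert (t+1) ((S1M n W).filter (fun s => s ≤ t)) by
    ext s
    simp only [Finset.mem_filter, Finset.mem_insert]
    constructor
    · rintro ⟨h1, h2⟩
      rcases Nat.lt_or_ge s (t+1) with h3 | h3
      · exact Or.inr ⟨h1, by omega⟩
      · exact Or.inl (by omega)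
    · rintro (rfl | ⟨h1, h2⟩)
      · exact ⟨h, by omega⟩
      · exact ⟨h1, by omega⟩]
  rw [Finset.image_insert]

lemma Sset_subset_V2 (hM : IsPerfectMatchingM n W M) {i : ℕ} :
    SsetF n W M i ⊆ V2M n W := by
  intro v hv
  obtain ⟨s, h1, h2, rfl⟩ := mem_SsetF.1 hv
  exact (mv_mem_V2 hM h1).1

lemma seqOf_AFF {i : ℕ} (h1 : 1 ≤ i) (h2 : i ≤ n) :
    seqOf n (AFF n W M c) i = gF n W M c i := by
  unfold seqOf AFF
  rw [dif_pos ⟨h1, h2⟩]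
  congr 1
  simp only [Fin.val_mk]
  omega

lemma pos_of_recv_eq (hM : IsPerfectMatchingM n W M) {f : ℕ → ℕ} {t a : ℕ}
    (hr : recv f t = Finset.Icc 1 a ∪ SsetF n W M t) :
    ∀ v ∈ recv f t, 0 < v := by
  intro v hv
  rw [hr, Finset.mem_union] at hv
  rcases hv with hv | hv
  · exact (Finset.mem_Icc.1 hv).1
  · exact V2_pos (Sset_subset_V2 hM hv)

lemma bufD_card (hW0 : W 0 = 0)
    (hrep : ∀ i ∈ RSet n W, (W i).natAbs = (W (i - 1)).natAbs)
    (hstep : ∀ i, 1 ≤ i → i ≤ n → i ∉ RSet n W →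
      (W i).natAbs ≤ (W (i - 1)).natAbs + 1)
    (hM : IsPerfectMatchingM n W M) {f : ℕ → ℕ} {t : ℕ} (ht : t ≤ n)
    (hr : recv f t = Finset.Icc 1 (ackOfMW W t - 1) ∪ SsetF n W M t)
    (hcard : (recv f t).card = nrW W t) :
    (bufDF n W M t).card = (W t).natAbs := by
  have hsd : SsetF n W M t \ Finset.Icc 1 (ackOfMW W t - 1) = bufDF n W M t := by
    ext x
    simp only [Finset.mem_sdiff, Finset.mem_Icc, bufDF, Finset.mem_filter]
    constructor
    · rintro ⟨h1, h2⟩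
      have := V2_pos (Sset_subset_V2 hM h1)
      exact ⟨h1, by omega⟩
    · rintro ⟨h1, h2⟩
      have := ackOfMW_pos W t
      exact ⟨h1, by omega⟩
  have hdisj : Disjoint (Finset.Icc 1 (ackOfMW W t - 1))
      (SsetF n W M t \ Finset.Icc 1 (ackOfMW W t - 1)) :=
    Finset.disjoint_sdiff
  have hkey : (recv f t).card = (ackOfMW W t - 1) + (bufDF n W M t).card := by
    rw [hr, ← Finset.union_sdiff_self_eq_union, Finset.card_union_of_disjoint hdisj,
      hsd, Nat.card_Icc]
    omega
  have hab := ack_add_b hW0 hrep hstep ht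
  have := ackOfMW_pos W t
  omega

lemma not_mem_io (hW0 : W 0 = 0) (hWn : W n = 0)
    (hrep : ∀ i ∈ RSet n W, (W i).natAbs = (W (i - 1)).natAbs)
    (hstep : ∀ i, 1 ≤ i → i ≤ n → i ∉ RSet n W →
      (W i).natAbs ≤ (W (i - 1)).natAbs + 1)
    (hM : IsPerfectMatchingM n W M) {f : ℕ → ℕ} {t : ℕ}
    (hio : t + 1 ∈ IOrd n W)
    (hr : recv f t = Finset.Icc 1 (ackOfMW W t - 1) ∪ SsetF n W M t) :
    ackOfMW W t ∉ recv f t := by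
  rw [hr, Finset.mem_union]
  rintro (h | h)
  · rw [Finset.mem_Icc] at h
    have := ackOfMW_pos W t
    omega
  · have hV2 := Sset_subset_V2 hM h
    have := (mem_V2M.1 hV2).2 (t+1) hio
    simp only [Nat.add_sub_cancel] at this
    exact this rfl

lemma not_mem_s1 (hM : IsPerfectMatchingM n W M) {f : ℕ → ℕ} {t : ℕ}
    (hs1 : t + 1 ∈ S1M n W)
    (hr : recv f t = Finset.Icc 1 (ackOfMW W t - 1) ∪ SsetF n W M t) :
    mvF M (t+1) ∉ recv f t := by
  have hneg : ¬ W (t+1) < 0 := (mem_S1M.1 hs1).2.2.1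
  have hS1c : (W (t+1)).natAbs = (W t).natAbs + 1 := by
    have := (mem_S1M.1 hs1).2.2.2
    simpa using this
  have hedge := (mv_mem_V2 hM hs1).2
  rw [ackOfMW_succ_S1 hneg hS1c] at hedge
  rw [hr, Finset.mem_union]
  rintro (h | h)
  · rw [Finset.mem_Icc] at h
    omega
  · obtain ⟨s, h1, h2, h3⟩ := mem_SsetF.1 h
    have := mv_inj hM h1 hs1 h3
    omega

lemma interval_mem (hW0 : W 0 = 0) (hWn : W n = 0)
    (hrep : ∀ i ∈ RSet n W, (W i).natAbs = (W (i - 1)).natAbs)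
    (hstep : ∀ i, 1 ≤ i → i ≤ n → i ∉ RSet n W →
      (W i).natAbs ≤ (W (i - 1)).natAbs + 1)
    (hM : IsPerfectMatchingM n W M) {t : ℕ}
    (hio : t + 1 ∈ IOrd n W) (hn : t + 1 ≤ n) {k : ℕ}
    (h1 : ackOfMW W t < k) (h2 : k < ackOfMW W (t+1)) :
    k ∈ SsetF n W M t := by
  have hkm : k ≤ n - (RSet n W).card := by
    have := ackOfMW_mono W hn
    have := ackOfMW_n hW0 hWn hrep hstep
    omega
  have hkV2 : k ∈ V2M n W := by
    rw [mem_V2M]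
    refine ⟨⟨by have := ackOfMW_pos W t; omega, hkm⟩, fun s hs => ?_⟩
    obtain ⟨hs1, hs2, _, _⟩ := mem_IOrd.1 hs
    rcases Nat.lt_or_ge s (t+2) with h3 | h3
    · have : ackOfMW W (s-1) ≤ ackOfMW W t := ackOfMW_mono W (by omega)
      omega
    · have : ackOfMW W (t+1) ≤ ackOfMW W (s-1) := ackOfMW_mono W (by omega)
      omega
  obtain ⟨s, hsk, _⟩ := hM.2.2 k hkV2
  obtain ⟨hsS1r, _, hedger⟩ := hM.1 (s, k) hsk
  have hsS1 : s ∈ S1M n W := hsS1r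
  have hedge : ackOfMW W s < k := hedger
  have hks : k = mvF M s := mv_eq hM hsS1 hsk
  have hst : s ≤ t := by
    rcases Nat.lt_or_ge t s with h3 | h3
    · exfalso
      have hsne : s ≠ t + 1 := by
        intro he
        subst he
        obtain ⟨_, _, _, hcon⟩ := mem_S1M.1 hsS1
        obtain ⟨_, _, _, hcon2⟩ := mem_IOrd.1 hio
        exact hcon2 hcon
      have : ackOfMW W (t+1) ≤ ackOfMW W s := ackOfMW_mono W (by omega)
      omega
    · exact h3
  exact mem_SsetF.2 ⟨s, hsS1, hst, hks.symm⟩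

end Bwd

end MbufAux

namespace MbufAux

section BwdInv

variable {n : ℕ} {W : ℕ → ℤ} {M : Finset (ℕ × ℕ)} {c : ℕ → ℕ}

lemma bufD_subset_Sset {t : ℕ} : bufDF n W M t ⊆ SsetF n W M t :=
  Finset.filter_subset _ _

lemma bufD_le {t v : ℕ} (hv : v ∈ bufDF n W M t) : ackOfMW W t ≤ v :=
  (Finset.mem_filter.1 hv).2

lemma bwd_inv (hW0 : W 0 = 0) (hWn : W n = 0)
    (hrep : ∀ i ∈ RSet n W, (W i).natAbs = (W (i - 1)).natAbs)
    (hstep : ∀ i, 1 ≤ i → i ≤ n → i ∉ RSet n W →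
      (W i).natAbs ≤ (W (i - 1)).natAbs + 1)
    (hM : IsPerfectMatchingM n W M)
    (hc : ∀ i ∈ RSet n W, 1 ≤ c i ∧ c i ≤ (W i).natAbs) :
    ∀ t, t ≤ n →
      recv (seqOf n (AFF n W M c)) t
        = Finset.Icc 1 (ackOfMW W t - 1) ∪ SsetF n W M t
      ∧ ACK (seqOf n (AFF n W M c)) t = ackOfMW W t
      ∧ (recv (seqOf n (AFF n W M c)) t).card = nrW W t := by
  intro t
  induction t with
  | zero =>
      intro _
      refine ⟨?_, ?_, ?_⟩
      · rw [recv_zero, ackOfMW_zero, Sset_zero]; simp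
      · rw [ACK_eq_iff, ackOfMW_zero]
        exact ⟨Nat.one_pos, by rw [recv_zero]; exact Finset.notMem_empty _,
          fun k hk h2 => by omega⟩
      · rw [recv_zero]; simp [nrW]
  | succ t ih =>
      intro hn1
      obtain ⟨hr, hack, hcard⟩ := ih (by omega)
      have hval : seqOf n (AFF n W M c) (t+1) = gF n W M c (t+1) :=
        seqOf_AFF (by omega) hn1
      have hpos := pos_of_recv_eq hM hr
      by_cases hR : t+1 ∈ RSet n W
      · have hbc := bufD_card hW0 hrep hstep hM (by omega) hr hcard
        have hcR := hc _ hR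
        have hbrep : (W (t+1)).natAbs = (W t).natAbs := by
          have := hrep _ hR; simpa using this
        have hWneg : W (t+1) < 0 := (mem_RSet.1 hR).2.2
        have hgv : gF n W M c (t+1) = nthS (bufDF n W M t) (c (t+1)) := by
          unfold gF; rw [if_pos hR]; simp only [Nat.add_sub_cancel]
        have hmemD : seqOf n (AFF n W M c) (t+1) ∈ bufDF n W M t := by
          rw [hval, hgv]
          exact nthS_mem (by omega) (by omega)
        have hmemrecv : seqOf n (AFF n W M c) (t+1)
            ∈ recv (seqOf n (AFF n W M c)) t := by
          rw [hr]
          exact Finset.mem_union_right _ (bufD_subset_Sset hmemD)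
        obtain ⟨hr2, hack2, _⟩ := step_rep hmemrecv
        have hackS : ackOfMW W (t+1) = ackOfMW W t := ackOfMW_succ_neg hWneg
        have hSs : SsetF n W M (t+1) = SsetF n W M t :=
          Sset_succ_not (fun hmem => (mem_S1M.1 hmem).2.2.1 hWneg)
        refine ⟨?_, ?_, ?_⟩
        · rw [hr2, hr, hackS, hSs]
        · rw [hack2, hack, hackS]
        · rw [hr2, hcard, nrW_succ]; simp [hWneg]
      · by_cases hS1 : t+1 ∈ S1M n W
        · have hnm : mvF M (t+1) ∉ recv (seqOf n (AFF n W M c)) t :=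
            not_mem_s1 hM hS1 hr
          have hgv : gF n W M c (t+1) = mvF M (t+1) := by
            unfold gF; rw [if_neg hR, if_pos hS1]
          have hWneg : ¬ W (t+1) < 0 := (mem_S1M.1 hS1).2.2.1
          have hS1c : (W (t+1)).natAbs = (W t).natAbs + 1 := by
            have := (mem_S1M.1 hS1).2.2.2; simpa using this
          have hackS : ackOfMW W (t+1) = ackOfMW W t :=
            ackOfMW_succ_S1 hWneg hS1c
          have hedge := (mv_mem_V2 hM hS1).2
          rw [hackS] at hedge
          have hgt : ACK (seqOf n (AFF n W M c)) t
              < seqOf n (AFF n W M c) (t+1) := by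
            rw [hval, hgv, hack]; exact hedge
          have hnm' : seqOf n (AFF n W M c) (t+1)
              ∉ recv (seqOf n (AFF n W M c)) t := by
            rw [hval, hgv]; exact hnm
          obtain ⟨hackstep, _⟩ := step_high hpos hnm' hgt
          refine ⟨?_, ?_, ?_⟩
          · rw [recv_succ, hval, hgv, hr, Sset_succ_S1 hS1, hackS]
            ext x
            simp only [Finset.mem_insert, Finset.mem_union]
            tauto
          · rw [hackstep, hack, hackS]
          · rw [recv_succ, Finset.card_insert_of_notMem hnm', hcard, nrW_succ]
            simp [hWneg]
        · have hWneg : ¬ W (t+1) < 0 :=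
            fun hw => hR (mem_RSet.2 ⟨by omega, hn1, hw⟩)
          have hnS1 : (W (t+1)).natAbs ≠ (W t).natAbs + 1 := fun hw =>
            hS1 (mem_S1M.2 ⟨by omega, hn1, hWneg, by simpa using hw⟩)
          have hio : t+1 ∈ IOrd n W :=
            mem_IOrd.2 ⟨by omega, hn1, hWneg, by simpa using hnS1⟩
          have hble : (W (t+1)).natAbs ≤ (W t).natAbs := by
            have := hstep (t+1) (by omega) hn1 hR
            simp only [Nat.add_sub_cancel] at this
            omega
          have hackS : ackOfMW W (t+1)
              = ackOfMW W t + ((W t).natAbs - (W (t+1)).natAbs) + 1 :=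
            ackOfMW_succ_io hWneg hnS1 hble
          have hnm : ackOfMW W t ∉ recv (seqOf n (AFF n W M c)) t :=
            not_mem_io hW0 hWn hrep hstep hM hio hr
          have hgv : gF n W M c (t+1) = ackOfMW W t := by
            unfold gF; rw [if_neg hR, if_neg hS1]
            simp only [Nat.add_sub_cancel]
          have hval2 : seqOf n (AFF n W M c) (t+1) = ackOfMW W t := by
            rw [hval, hgv]
          have hSs : SsetF n W M (t+1) = SsetF n W M t := Sset_succ_not hS1
          have hacknew : ACK (seqOf n (AFF n W M c)) (t+1) = ackOfMW W (t+1) := by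
            rw [ACK_eq_iff]
            refine ⟨by have := ackOfMW_pos W (t+1); omega, ?_, ?_⟩
            · rw [recv_succ, hval2, Finset.mem_insert]
              rintro (he | he)
              · omega
              · rw [hr, Finset.mem_union] at he
                rcases he with he | he
                · rw [Finset.mem_Icc] at he
                  omega
                · exact ackOfMW_not_mem_V2M hW0 hWn hrep hstep hn1
                    (Sset_subset_V2 hM he)
            · intro k hk hklt
              rw [recv_succ, hval2, Finset.mem_insert]
              rcases Nat.lt_or_ge k (ackOfMW W t) with h3 | h3
              · right; rw [hr]
                exact Finset.mem_union_left _ (Finset.mem_Icc.2 ⟨hk, by omega⟩)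
              · rcases Nat.eq_or_lt_of_le h3 with h4 | h4
                · left; omega
                · right; rw [hr]
                  exact Finset.mem_union_right _
                    (interval_mem hW0 hWn hrep hstep hM hio hn1 h4 hklt)
          refine ⟨?_, hacknew, ?_⟩
          · rw [recv_succ, hval2, hr, hSs]
            ext x
            simp only [Finset.mem_insert, Finset.mem_union, Finset.mem_Icc]
            constructor
            · rintro (rfl | ⟨h5, h6⟩ | h5)
              · left; exact ⟨ackOfMW_pos W t, by omega⟩
              · left; exact ⟨h5, by omega⟩
              · right; exact h5
            · rintro (⟨h5, h6⟩ | h5)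
              · rcases Nat.lt_trichotomy x (ackOfMW W t) with h7 | h7 | h7
                · right; left; exact ⟨h5, by omega⟩
                · left; omega
                · right; right
                  exact interval_mem hW0 hWn hrep hstep hM hio hn1 h7 (by omega)
              · right; exact Or.inr h5
          · rw [recv_succ,
              Finset.card_insert_of_notMem (by rw [hval2]; exact hnm),
              hcard, nrW_succ]
            simp [hWneg]

end BwdInv

end MbufAux

namespace MbufAux

def matchOf (n : ℕ) (W : ℕ → ℤ) (A : Fin n → ℕ) : Finset (ℕ × ℕ) :=
  (S1M n W).image (fun i => (i, seqOf n A i))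

lemma seqOf_apply {n : ℕ} (A : Fin n → ℕ) (k : Fin n) :
    seqOf n A (k.1 + 1) = A k := by
  unfold seqOf
  rw [dif_pos ⟨by omega, by omega⟩]
  congr 1

section Bwd2

variable {n : ℕ} {W : ℕ → ℤ} {M : Finset (ℕ × ℕ)} {c : ℕ → ℕ}

variable (hW0 : W 0 = 0) (hWn : W n = 0)
    (hrep : ∀ i ∈ RSet n W, (W i).natAbs = (W (i - 1)).natAbs)
    (hstep : ∀ i, 1 ≤ i → i ≤ n → i ∉ RSet n W →
      (W i).natAbs ≤ (W (i - 1)).natAbs + 1)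
    (hM : IsPerfectMatchingM n W M)
    (hc : ∀ i ∈ RSet n W, 1 ≤ c i ∧ c i ≤ (W i).natAbs)

include hW0 hWn hrep hstep hM hc in
lemma bwd_step_facts {t : ℕ} (h2 : t + 1 ≤ n) :
    (t+1 ∈ RSet n W → seqOf n (AFF n W M c) (t+1) ∈ bufDF n W M t) ∧
    (t+1 ∉ RSet n W →
      seqOf n (AFF n W M c) (t+1) ∉ recv (seqOf n (AFF n W M c)) t) := by
  obtain ⟨hr, hack, hcard⟩ := bwd_inv hW0 hWn hrep hstep hM hc t (by omega)
  have hval : seqOf n (AFF n W M c) (t+1) = gF n W M c (t+1) :=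
    seqOf_AFF (by omega) h2
  constructor
  · intro hR
    have hbc := bufD_card hW0 hrep hstep hM (by omega) hr hcard
    have hcR := hc _ hR
    have hbrep : (W (t+1)).natAbs = (W t).natAbs := by
      have := hrep _ hR; simpa using this
    rw [hval]
    unfold gF
    rw [if_pos hR]
    simp only [Nat.add_sub_cancel]
    exact nthS_mem (by omega) (by omega)
  · intro hR
    by_cases hS1 : t+1 ∈ S1M n W
    · have hgv : gF n W M c (t+1) = mvF M (t+1) := by
        unfold gF; rw [if_neg hR, if_pos hS1]
      rw [hval, hgv]
      exact not_mem_s1 hM hS1 hr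
    · have hWneg : ¬ W (t+1) < 0 :=
        fun hw => hR (mem_RSet.2 ⟨by omega, h2, hw⟩)
      have hnS1 : (W (t+1)).natAbs ≠ (W t).natAbs + 1 := fun hw =>
        hS1 (mem_S1M.2 ⟨by omega, h2, hWneg, by simpa using hw⟩)
      have hio : t+1 ∈ IOrd n W :=
        mem_IOrd.2 ⟨by omega, h2, hWneg, by simpa using hnS1⟩
      have hgv : gF n W M c (t+1) = ackOfMW W t := by
        unfold gF; rw [if_neg hR, if_neg hS1]
        simp only [Nat.add_sub_cancel]
      rw [hval, hgv]
      exact not_mem_io hW0 hWn hrep hstep hM hio hr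

include hW0 hWn hrep hstep hM hc in
lemma bwd_mem : AFF n W M c ∈ mbufPreimage n W := by
  have hstepf : ∀ t : ℕ, t + 1 ≤ n →
      (t+1 ∈ RSet n W → seqOf n (AFF n W M c) (t+1) ∈ bufDF n W M t) ∧
      (t+1 ∉ RSet n W →
        seqOf n (AFF n W M c) (t+1) ∉ recv (seqOf n (AFF n W M c)) t) :=
    fun t h2 => bwd_step_facts hW0 hWn hrep hstep hM hc h2
  have hrepeat : ∀ i, 1 ≤ i → i ≤ n →
      (IsRepeat (seqOf n (AFF n W M c)) i ↔ i ∈ RSet n W) := by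
    intro i h1 h2
    obtain ⟨t, rfl⟩ : ∃ t, i = t + 1 := ⟨i - 1, by omega⟩
    constructor
    · intro hrp
      by_contra hR
      exact (hstepf t h2).2 hR (by
        have := (IsRepeat_iff h1).1 hrp
        simpa using this)
    · intro hR
      obtain ⟨hrI, _, _⟩ := bwd_inv hW0 hWn hrep hstep hM hc t (by omega)
      have hmem := (hstepf t h2).1 hR
      rw [IsRepeat_iff h1]
      simp only [Nat.add_sub_cancel]
      rw [hrI]
      exact Finset.mem_union_right _ (bufD_subset_Sset hmem)
  have hbsize : ∀ i, i ≤ n →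
      bufSize (seqOf n (AFF n W M c)) i = (W i).natAbs := by
    intro i h2
    obtain ⟨hrI, hackI, hcardI⟩ := bwd_inv hW0 hWn hrep hstep hM hc i h2
    have hposr := pos_of_recv_eq hM hrI
    have hrc := recv_card hposr
    have hab := ack_add_b hW0 hrep hstep h2
    have := ackOfMW_pos W i
    omega
  refine ⟨?_, ?_, ?_⟩
  · intro k
    have h2 : k.1 + 1 ≤ n := by omega
    have hval : seqOf n (AFF n W M c) (k.1+1) = gF n W M c (k.1+1) :=
      seqOf_AFF (by omega) h2
    have hpos : 0 < seqOf n (AFF n W M c) (k.1 + 1) := by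
      by_cases hR : k.1+1 ∈ RSet n W
      · have := (hstepf k.1 h2).1 hR
        exact V2_pos (Sset_subset_V2 hM (bufD_subset_Sset this))
      · rw [hval]
        unfold gF
        rw [if_neg hR]
        by_cases hS1 : k.1+1 ∈ S1M n W
        · rw [if_pos hS1]
          exact V2_pos (mv_mem_V2 hM hS1).1
        · rw [if_neg hS1]
          exact ackOfMW_pos W _
    rwa [seqOf_apply] at hpos
  · intro i h1 h2 hrp
    have hR := (hrepeat i h1 h2).1 hrp
    obtain ⟨t, rfl⟩ : ∃ t, i = t + 1 := ⟨i - 1, by omega⟩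
    have hmem := (hstepf t h2).1 hR
    obtain ⟨_, hackI, _⟩ := bwd_inv hW0 hWn hrep hstep hM hc t (by omega)
    simp only [Nat.add_sub_cancel]
    rw [hackI]
    exact bufD_le hmem
  · intro i h1 h2
    have hb := hbsize i h2
    unfold mbuf
    by_cases hR : i ∈ RSet n W
    · rw [if_pos ((hrepeat i h1 h2).2 hR), hb]
      have := (mem_RSet.1 hR).2.2
      omega
    · rw [if_neg (fun hrp => hR ((hrepeat i h1 h2).1 hrp)), hb]
      have : ¬ W i < 0 := fun hw => hR (mem_RSet.2 ⟨h1, h2, hw⟩)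
      omega

include hW0 hWn hrep hstep hM hc in
lemma bwd_matchOf : matchOf n W (AFF n W M c) = M := by
  ext p
  unfold matchOf
  rw [Finset.mem_image]
  constructor
  · rintro ⟨i, hi, rfl⟩
    obtain ⟨h1, h2, hneg, _⟩ := mem_S1M.1 hi
    have hR : i ∉ RSet n W := fun hR => hneg (mem_RSet.1 hR).2.2
    rw [seqOf_AFF h1 h2]
    unfold gF
    rw [if_neg hR, if_pos hi]
    exact mv_mem hM hi
  · intro hp
    obtain ⟨hS1, _, _⟩ := hM.1 p hp
    refine ⟨p.1, hS1, ?_⟩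
    have hS1' : p.1 ∈ S1M n W := hS1
    obtain ⟨h1, h2, hneg, _⟩ := mem_S1M.1 hS1'
    have hR : p.1 ∉ RSet n W := fun hR => hneg (mem_RSet.1 hR).2.2
    have : seqOf n (AFF n W M c) p.1 = p.2 := by
      rw [seqOf_AFF h1 h2]
      unfold gF
      rw [if_neg hR, if_pos hS1']
      exact (mv_eq hM hS1' hp).symm
    rw [this]

include hW0 hWn hrep hstep hM hc in
lemma bwd_rank {i : ℕ} (hi : i ∈ RSet n W) :
    rankS ((recv (seqOf n (AFF n W M c)) (i-1)).filter
        (fun v => ACK (seqOf n (AFF n W M c)) (i-1) ≤ v))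
      (seqOf n (AFF n W M c) i) = c i := by
  obtain ⟨h1, h2, hneg⟩ := mem_RSet.1 hi
  obtain ⟨t, rfl⟩ : ∃ t, i = t + 1 := ⟨i - 1, by omega⟩
  obtain ⟨hrI, hackI, hcardI⟩ := bwd_inv hW0 hWn hrep hstep hM hc t (by omega)
  simp only [Nat.add_sub_cancel]
  have hbuf : (recv (seqOf n (AFF n W M c)) t).filter
      (fun v => ACK (seqOf n (AFF n W M c)) t ≤ v) = bufDF n W M t := by
    ext x
    rw [Finset.mem_filter, hrI, hackI, Finset.mem_union, Finset.mem_Icc]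
    unfold bufDF
    rw [Finset.mem_filter]
    constructor
    · rintro ⟨h3 | h3, h4⟩
      · omega
      · exact ⟨h3, h4⟩
    · rintro ⟨h3, h4⟩
      exact ⟨Or.inr h3, h4⟩
  rw [hbuf]
  have hval : seqOf n (AFF n W M c) (t+1) = gF n W M c (t+1) :=
    seqOf_AFF (by omega) h2
  have hbc := bufD_card hW0 hrep hstep hM (by omega) hrI hcardI
  have hcR := hc _ hi
  have hbrep : (W (t+1)).natAbs = (W t).natAbs := by
    have := hrep _ hi; simpa using this
  rw [hval]
  unfold gF
  rw [if_pos hi]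
  simp only [Nat.add_sub_cancel]
  exact rankS_nthS (by omega) (by omega)

end Bwd2

end MbufAux

namespace MbufAux

noncomputable def bufFS (n : ℕ) (A : Fin n → ℕ) (i : ℕ) : Finset ℕ :=
  (recv (seqOf n A) i).filter (fun v => ACK (seqOf n A) i ≤ v)

noncomputable def PhiF (n : ℕ) (W : ℕ → ℤ) (A : Fin n → ℕ) :
    Finset (ℕ × ℕ) × (∀ a ∈ RSet n W, ℕ) :=
  (matchOf n W A, fun i _ => rankS (bufFS n A (i-1)) (seqOf n A i))

lemma mem_matchOf {n : ℕ} {W : ℕ → ℤ} {A : Fin n → ℕ} {p : ℕ × ℕ} :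
    p ∈ matchOf n W A ↔ ∃ i ∈ S1M n W, (i, seqOf n A i) = p := by
  unfold matchOf
  exact Finset.mem_image

lemma class_tri {n : ℕ} {W : ℕ → ℤ} {i : ℕ} (h1 : 1 ≤ i) (h2 : i ≤ n) :
    i ∈ RSet n W ∨ i ∈ S1M n W ∨ i ∈ IOrd n W := by
  rw [mem_RSet, mem_S1M, mem_IOrd]
  by_cases h : W i < 0
  · tauto
  · by_cases h' : (W i).natAbs = (W (i-1)).natAbs + 1 <;> tauto

lemma S1_IOrd_disj {n : ℕ} {W : ℕ → ℤ} {i : ℕ} (h : i ∈ S1M n W) :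
    i ∉ IOrd n W := fun h' => (mem_IOrd.1 h').2.2.2 (mem_S1M.1 h).2.2.2

section FwdPack

variable {n : ℕ} {W : ℕ → ℤ} {A : Fin n → ℕ}

variable (hW0 : W 0 = 0) (hWn : W n = 0)
    (hne : ∀ i, 1 ≤ i → i < n → W i ≠ 0)
    (hrep : ∀ i ∈ RSet n W, (W i).natAbs = (W (i - 1)).natAbs)
    (hstep : ∀ i, 1 ≤ i → i ≤ n → i ∉ RSet n W →
      (W i).natAbs ≤ (W (i - 1)).natAbs + 1)
    (hA : A ∈ mbufPreimage n W)

include hW0 hWn hne hA in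
lemma fwd_val_ne {s t : ℕ} (hs : 1 ≤ s) (hst : s < t) (ht : t ≤ n)
    (hneg : ¬ W t < 0) : seqOf n A s ≠ seqOf n A t := by
  intro he
  have hnm := fwd_not_mem hW0 hWn hne hA (by omega) ht hneg
  exact hnm (mem_recv.2 ⟨s, hs, by omega, he⟩)

include hW0 hWn hne hA in
lemma fwd_S1_inj {s t : ℕ} (hs : s ∈ S1M n W) (ht : t ∈ S1M n W)
    (he : seqOf n A s = seqOf n A t) : s = t := by
  obtain ⟨hs1, hs2, hs3, _⟩ := mem_S1M.1 hs
  obtain ⟨ht1, ht2, ht3, _⟩ := mem_S1M.1 ht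
  rcases Nat.lt_trichotomy s t with h | h | h
  · exact absurd he (fwd_val_ne hW0 hWn hne hA hs1 h ht2 ht3)
  · exact h
  · exact absurd he.symm (fwd_val_ne hW0 hWn hne hA ht1 h hs2 hs3)

include hW0 hWn hne hrep hstep hA in
lemma fwd_matching : IsPerfectMatchingM n W (matchOf n W A) := by
  refine ⟨?_, ?_, ?_⟩
  · intro p hp
    obtain ⟨i, hi, rfl⟩ := mem_matchOf.1 hp
    obtain ⟨h1, h2, hneg, hS1c⟩ := mem_S1M.1 hi
    refine ⟨hi, ?_, ?_⟩
    · rw [mem_V2M]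
      refine ⟨⟨seqOf_pos hA h1 h2, ?_⟩, ?_⟩
      · exact fwd_le_m hW0 hWn hne hrep hstep hA
          (mem_recv.2 ⟨i, h1, h2, rfl⟩)
      · intro s hs he
        have hsio := mem_IOrd.1 hs
        have hfs : seqOf n A s = seqOf n A i := by
          rw [fwd_io_val hW0 hWn hne hA hs, he]
        have hsne : s ≠ i := fun hcon => S1_IOrd_disj hi (hcon ▸ hs)
        rcases Nat.lt_trichotomy s i with h | h | h
        · exact fwd_val_ne hW0 hWn hne hA hsio.1 h h2 hneg hfs
        · exact hsne h
        · exact fwd_val_ne hW0 hWn hne hA h1 h hsio.2.1 hsio.2.2.1 hfs.symm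
    · obtain ⟨t, rfl⟩ : ∃ t, i = t + 1 := ⟨i - 1, by omega⟩
      have h4 := fwd_s1_val hW0 hWn hne hA hi
      simp only [Nat.add_sub_cancel] at h4 hS1c
      rw [ackOfMW_succ_S1 hneg hS1c]
      exact h4.2
  · intro i hi
    refine ⟨seqOf n A i, mem_matchOf.2 ⟨i, hi, rfl⟩, ?_⟩
    intro j hj
    obtain ⟨s, hs, he⟩ := mem_matchOf.1 hj
    have he1 : s = i := congrArg Prod.fst he
    have he2 : seqOf n A s = j := congrArg Prod.snd he
    rw [← he2, he1]
  · intro j hj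
    have hjm := mem_V2M.1 hj
    have hackn := fwd_ACK hW0 hWn hne hA n le_rfl
    have hjlt : j < ACK (seqOf n A) n := by
      rw [hackn, ackOfMW_n hW0 hWn hrep hstep]
      omega
    have hjrecv : j ∈ recv (seqOf n A) n :=
      mem_recv_of_lt_ACK (by omega) hjlt
    obtain ⟨t, ht1, ht2, ht3⟩ := mem_recv.1 hjrecv
    have hTne : {u : ℕ | 1 ≤ u ∧ u ≤ n ∧ seqOf n A u = j}.Nonempty :=
      ⟨t, ht1, ht2, ht3⟩
    obtain ⟨h01, h02, h03⟩ := Nat.sInf_mem hTne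
    have hnotrep : ¬ IsRepeat (seqOf n A)
        (sInf {u : ℕ | 1 ≤ u ∧ u ≤ n ∧ seqOf n A u = j}) := by
      rintro ⟨u, hu1, hu2, hu3⟩
      have hmem : u ∈ {u : ℕ | 1 ≤ u ∧ u ≤ n ∧ seqOf n A u = j} :=
        ⟨hu1, by omega, by rw [hu3, h03]⟩
      have := Nat.sInf_le hmem
      omega
    rcases class_tri h01 h02 with hcl | hcl | hcl
    · exact absurd
        ((fwd_repeat_iff hW0 hWn hne hA h01 h02).2 (mem_RSet.1 hcl).2.2) hnotrep
    · refine ⟨sInf {u : ℕ | 1 ≤ u ∧ u ≤ n ∧ seqOf n A u = j},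
        mem_matchOf.2 ⟨_, hcl, by rw [h03]⟩, ?_⟩
      intro s' hs'
      obtain ⟨s, hs, he⟩ := mem_matchOf.1 hs'
      have he1 : s = s' := congrArg Prod.fst he
      have he2 : seqOf n A s = j := congrArg Prod.snd he
      rw [← he1]
      exact fwd_S1_inj hW0 hWn hne hA hs hcl (by rw [he2, h03])
    · exfalso
      have hio := fwd_io_val hW0 hWn hne hA hcl
      exact hjm.2 _ hcl (by rw [← hio, h03])

end FwdPack

end MbufAux

namespace MbufAux

section FwdPack2

variable {n : ℕ} {W : ℕ → ℤ}

variable (hW0 : W 0 = 0) (hWn : W n = 0)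
    (hne : ∀ i, 1 ≤ i → i < n → W i ≠ 0)
    (hrep : ∀ i ∈ RSet n W, (W i).natAbs = (W (i - 1)).natAbs)
    (hstep : ∀ i, 1 ≤ i → i ≤ n → i ∉ RSet n W →
      (W i).natAbs ≤ (W (i - 1)).natAbs + 1)

include hW0 hWn hne hrep in
lemma fwd_rank_mem {A : Fin n → ℕ} (hA : A ∈ mbufPreimage n W) {i : ℕ}
    (hi : i ∈ RSet n W) :
    seqOf n A i ∈ bufFS n A (i-1) ∧
    1 ≤ rankS (bufFS n A (i-1)) (seqOf n A i) ∧
    rankS (bufFS n A (i-1)) (seqOf n A i) ≤ (W i).natAbs := by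
  obtain ⟨h1, h2, hneg⟩ := mem_RSet.1 hi
  have hrp : IsRepeat (seqOf n A) i :=
    (fwd_repeat_iff hW0 hWn hne hA h1 h2).2 hneg
  have hmem : seqOf n A i ∈ recv (seqOf n A) (i-1) := (IsRepeat_iff h1).1 hrp
  have hsd := hA.2.1 i h1 h2 hrp
  have hbuf : seqOf n A i ∈ bufFS n A (i-1) := Finset.mem_filter.2 ⟨hmem, hsd⟩
  have hcard : (bufFS n A (i-1)).card = (W (i-1)).natAbs :=
    fwd_bsize hW0 hA (show i - 1 ≤ n by omega)
  have hle := rankS_le hbuf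
  have hr := hrep _ hi
  exact ⟨hbuf, rankS_pos _ _, by omega⟩

include hW0 hWn hne hrep hstep in
lemma fwd_inj {A A' : Fin n → ℕ} (hA : A ∈ mbufPreimage n W)
    (hA' : A' ∈ mbufPreimage n W) (hPhi : PhiF n W A = PhiF n W A') :
    A = A' := by
  have hmatch : matchOf n W A = matchOf n W A' := congrArg Prod.fst hPhi
  have hrank := congrArg Prod.snd hPhi
  have key : ∀ t, t ≤ n → ∀ j, 1 ≤ j → j ≤ t → seqOf n A j = seqOf n A' j := by
    intro t
    induction t with
    | zero => intro _ j hj1 hj2; omega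
    | succ t ih =>
        intro ht j hj1 hj2
        rcases Nat.lt_or_ge j (t+1) with hj | hj
        · exact ih (by omega) j hj1 (by omega)
        · have hj' : j = t+1 := by omega
          subst hj'
          have hrecv : recv (seqOf n A) t = recv (seqOf n A') t := by
            unfold recv
            apply Finset.image_congr
            intro x hx
            rw [Finset.mem_coe, Finset.mem_Icc] at hx
            exact ih (by omega) x hx.1 hx.2
          have hACK : ACK (seqOf n A) t = ACK (seqOf n A') t := ACK_congr hrecv
          rcases class_tri (show 1 ≤ t+1 by omega) ht with hcl | hcl | hcl
          · have hm1 := fwd_rank_mem hW0 hWn hne hrep hA hcl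
            have hm2 := fwd_rank_mem hW0 hWn hne hrep hA' hcl
            simp only [Nat.add_sub_cancel] at hm1 hm2
            have hbfe : bufFS n A t = bufFS n A' t := by
              unfold bufFS; rw [hrecv, hACK]
            have hre := congrFun (congrFun hrank (t+1)) hcl
            simp only [PhiF, Nat.add_sub_cancel] at hre
            rw [hbfe] at hre
            have hmem1 : seqOf n A (t+1) ∈ bufFS n A' t := hbfe ▸ hm1.1
            exact rankS_injOn hmem1 hm2.1 hre
          · have h1 : (t+1, seqOf n A (t+1)) ∈ matchOf n W A :=
              mem_matchOf.2 ⟨t+1, hcl, rfl⟩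
            rw [hmatch] at h1
            obtain ⟨s, hs, he⟩ := mem_matchOf.1 h1
            have he1 : s = t+1 := congrArg Prod.fst he
            have he2 : seqOf n A' s = seqOf n A (t+1) := congrArg Prod.snd he
            exact (he1 ▸ he2).symm
          · rw [fwd_io_val hW0 hWn hne hA hcl, fwd_io_val hW0 hWn hne hA' hcl]
  funext k
  have := key n le_rfl (k.1+1) (by omega) (by omega)
  rwa [seqOf_apply, seqOf_apply] at this

end FwdPack2

end MbufAux


open MbufAux in
/-- Counting preimages of modified buffer sequences:
`|B̄⁻¹(W)| = |MATCH(G(W))| · ∏_{i ∈ R} |W_i|`. In particular `B̄⁻¹(W) ≠ ∅` iff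
`G(W)` has a perfect matching. -/
theorem mbuf_preimage_count (n : ℕ) (W : ℕ → ℤ)
    (hW0 : W 0 = 0) (hWn : W n = 0)
    (hne : ∀ i, 1 ≤ i → i < n → W i ≠ 0)
    (hrep : ∀ i ∈ RSet n W, (W i).natAbs = (W (i - 1)).natAbs)
    (hstep : ∀ i, 1 ≤ i → i ≤ n → i ∉ RSet n W →
      (W i).natAbs ≤ (W (i - 1)).natAbs + 1) :
    (mbufPreimage n W).ncard =
      {M : Finset (ℕ × ℕ) | IsPerfectMatchingM n W M}.ncard *
        ∏ i ∈ RSet n W, (W i).natAbs ∧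
    ((mbufPreimage n W).Nonempty ↔
      ∃ M : Finset (ℕ × ℕ), IsPerfectMatchingM n W M) := by
  classical
  set MS : Finset (Finset (ℕ × ℕ)) :=
    ((S1M n W ×ˢ V2M n W).powerset).filter (fun M => IsPerfectMatchingM n W M)
    with hMSdef
  set CS : Finset (∀ a ∈ RSet n W, ℕ) :=
    (RSet n W).pi (fun i => Finset.Icc 1 (W i).natAbs) with hCSdef
  have hMSmem : ∀ M : Finset (ℕ × ℕ), M ∈ MS ↔ IsPerfectMatchingM n W M := by
    intro M
    rw [hMSdef, Finset.mem_filter, Finset.mem_powerset]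
    constructor
    · exact fun h => h.2
    · intro h
      exact ⟨fun p hp => Finset.mem_product.2 ⟨(h.1 p hp).1, (h.1 p hp).2.1⟩, h⟩
  have hMS : {M : Finset (ℕ × ℕ) | IsPerfectMatchingM n W M} = ↑MS := by
    ext M
    rw [Set.mem_setOf_eq, Finset.mem_coe, hMSmem M]
  have himg : PhiF n W '' mbufPreimage n W = ↑(MS ×ˢ CS) := by
    apply Set.Subset.antisymm
    · rintro _ ⟨A, hA, rfl⟩
      simp only [Finset.coe_product, Set.mem_prod, Finset.mem_coe]
      constructor
      · exact (hMSmem _).2 (fwd_matching hW0 hWn hne hrep hstep hA)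
      · rw [Finset.mem_pi]
        intro i hi
        rw [Finset.mem_Icc]
        have := fwd_rank_mem hW0 hWn hne hrep hA hi
        exact ⟨this.2.1, this.2.2⟩
    · rintro ⟨M, cc⟩ hp
      simp only [Finset.coe_product, Set.mem_prod, Finset.mem_coe] at hp
      obtain ⟨hpM, hpc⟩ := hp
      have hM := (hMSmem M).1 hpM
      rw [hCSdef, Finset.mem_pi] at hpc
      set c : ℕ → ℕ := fun i => if h : i ∈ RSet n W then cc i h else 0 with hcdef
      have hc : ∀ i ∈ RSet n W, 1 ≤ c i ∧ c i ≤ (W i).natAbs := by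
        intro i hi
        have := hpc i hi
        rw [Finset.mem_Icc] at this
        simp only [hcdef, dif_pos hi]
        exact this
      refine ⟨AFF n W M c, bwd_mem hW0 hWn hrep hstep hM hc, ?_⟩
      unfold PhiF
      rw [Prod.mk.injEq]
      constructor
      · exact bwd_matchOf hW0 hWn hrep hstep hM hc
      · funext i hi
        have hr := bwd_rank hW0 hWn hrep hstep hM hc hi
        unfold bufFS
        rw [hr]
        simp only [hcdef, dif_pos hi]
  have hinj : Set.InjOn (PhiF n W) (mbufPreimage n W) :=
    fun A hA A' hA' h => fwd_inj hW0 hWn hne hrep hstep hA hA' h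
  have hncard : (mbufPreimage n W).ncard = (MS ×ˢ CS).card := by
    rw [← Set.ncard_coe_finset, ← himg, Set.ncard_image_of_injOn hinj]
  have hCS : CS.card = ∏ i ∈ RSet n W, (W i).natAbs := by
    rw [hCSdef, Finset.card_pi]
    apply Finset.prod_congr rfl
    intro i _
    rw [Nat.card_Icc]
    omega
  constructor
  · rw [hncard, Finset.card_product, hCS, hMS, Set.ncard_coe_finset]
  · constructor
    · rintro ⟨A, hA⟩
      exact ⟨matchOf n W A, fwd_matching hW0 hWn hne hrep hstep hA⟩
    · rintro ⟨M, hM⟩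
      refine ⟨AFF n W M (fun _ => 1), bwd_mem hW0 hWn hrep hstep hM ?_⟩
      intro i hi
      have := (mem_RSet.1 hi).2.2
      exact ⟨le_refl 1, by omega⟩
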